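/- Let n ≥ 1 and let P_0, ..., P_{n-2} be functions where each P_i takes i+2 arguments from Fin (2^n) and returns a Boolean. Then there exist bits b_0, ..., b_{n-2} ∈ Bool and pairwise distinct elements a_0, ..., a_n ∈ Fin (2^n) such that for all i < j (with i ≤ n-2 and j ≤ n), P_i(a_0, ..., a_i, a_j) = b_i. -/

import Mathlib

namespace LongChoiceAux

variable {α : Type*} [DecidableEq α] [Fintype α] [Nonempty α]

noncomputable def pick (s : Finset α) : α :=
  if h : s.Nonempty then h.choose else Classical.arbitrary α

lemma pick_mem {s : Finset α} (h : s.Nonempty) : pick s ∈ s := by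
  rw [pick, dif_pos h]; exact h.choose_spec

variable (P : (i : ℕ) → (ℕ → α) → α → Bool)

noncomputable def F : ℕ → Finset α × (ℕ → α)
  | 0 => (Finset.univ, fun _ => Classical.arbitrary α)
  | i+1 =>
    let s := (F i).1
    let ai := pick s
    let a := Function.update (F i).2 i ai
    let b : Bool := decide (s.card ≤ 2 * ((s.erase ai).filter (fun x => P i a x = true)).card + 1)
    (((s.erase ai).filter (fun x => P i a x = b)), a)

noncomputable def A (i : ℕ) : α := pick (F P i).1

noncomputable def bb (i : ℕ) : Bool :=
  decide ((F P i).1.card ≤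
    2 * (((F P i).1.erase (A P i)).filter (fun x => P i ((F P (i+1)).2) x = true)).card + 1)

lemma F_succ_snd (i : ℕ) :
    (F P (i+1)).2 = Function.update (F P i).2 i (A P i) := rfl

lemma F_succ_fst (i : ℕ) :
    (F P (i+1)).1 =
      ((F P i).1.erase (A P i)).filter (fun x => P i ((F P (i+1)).2) x = bb P i) := rfl

lemma F_snd_eq : ∀ j t, t < j → (F P j).2 t = A P t := by
  intro j
  induction j with
  | zero => intro t ht; omega
  | succ j ih =>
    intro t ht
    rw [F_succ_snd]
    rcases eq_or_lt_of_le (Nat.lt_succ_iff.mp ht) with h | h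
    · subst h; simp [Function.update_self]
    · rw [Function.update_of_ne (by omega)]; exact ih t h

lemma F_subset_succ (i : ℕ) : (F P (i+1)).1 ⊆ (F P i).1.erase (A P i) := by
  rw [F_succ_fst]; exact Finset.filter_subset _ _

lemma F_subset : ∀ i j, i ≤ j → (F P j).1 ⊆ (F P i).1 := by
  intro i j hij
  induction j with
  | zero => simp_all
  | succ j ih =>
    rcases eq_or_lt_of_le hij with h | h
    · subst h; exact subset_rfl
    · exact (F_subset_succ P j).trans ((Finset.erase_subset _ _).trans (ih (by omega)))

lemma card_succ (i : ℕ) : (F P i).1.card ≤ 2 * (F P (i+1)).1.card + 1 := by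
  rcases (F P i).1.eq_empty_or_nonempty with h | h
  · simp [h]
  · have hmem : A P i ∈ (F P i).1 := pick_mem h
    have hpos : 1 ≤ (F P i).1.card := Finset.card_pos.mpr h
    have hcard : ((F P i).1.erase (A P i)).card = (F P i).1.card - 1 :=
      Finset.card_erase_of_mem hmem
    set e := (F P i).1.erase (A P i) with he
    set T := e.filter (fun x => P i ((F P (i+1)).2) x = true) with hT
    set Fb := e.filter (fun x => P i ((F P (i+1)).2) x = false) with hF
    have hTF : T.card + Fb.card = e.card := by
      have hFb : Fb = e.filter (fun x => ¬ (P i ((F P (i+1)).2) x = true)) := by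
        simp [hF, Bool.not_eq_true]
      rw [hT, hFb]
      exact Finset.card_filter_add_card_filter_not _
    rw [F_succ_fst]
    rcases hbb : bb P i with _ | _
    · have hlt : ¬ ((F P i).1.card ≤ 2 * T.card + 1) := by
        have := hbb
        rw [bb, decide_eq_false_iff_not] at this
        exact this
      have : ((e.filter (fun x => P i ((F P (i+1)).2) x = false))).card = Fb.card := rfl
      simp only [← he]
      omega
    · have hle : (F P i).1.card ≤ 2 * T.card + 1 := by
        have := hbb
        rw [bb, decide_eq_true_iff] at this
        exact this
      simp only [← he]
      have : ((e.filter (fun x => P i ((F P (i+1)).2) x = true))).card = T.card := rfl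
      omega

end LongChoiceAux

open LongChoiceAux in
/-- Totality of the Long Choice problem: given predicates `P i` taking
`i+2` arguments from `Fin (2^n)`, there are bits `b 0, …, b (n-2)` and
pairwise distinct `a 0, …, a n` forming a `b`-sequence for `P`. -/
theorem long_choice_total (n : ℕ) (hn : 1 ≤ n)
    (P : (i : ℕ) → (Fin (i + 1) → Fin (2 ^ n)) → Fin (2 ^ n) → Bool) :
    ∃ (b : ℕ → Bool) (a : ℕ → Fin (2 ^ n)),
      (∀ i j, i ≤ n → j ≤ n → i ≠ j → a i ≠ a j) ∧
      (∀ i j, i + 2 ≤ n → j ≤ n → i < j →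
        P i (fun t => a t.val) (a j) = b i) := by
  haveI : Nonempty (Fin (2 ^ n)) := ⟨⟨0, Nat.two_pow_pos n⟩⟩
  set P' : (i : ℕ) → (ℕ → Fin (2 ^ n)) → Fin (2 ^ n) → Bool :=
    fun i f x => P i (fun t => f t.val) x with hP'
  have key : ∀ i, i ≤ n → 2 ^ (n - i) ≤ (F P' i).1.card := by
    intro i
    induction i with
    | zero =>
      intro _
      have : (F P' 0).1 = Finset.univ := rfl
      simp [this]
    | succ i ih =>
      intro hi
      have h1 := ih (by omega)
      have h2 := card_succ P' i
      have h3 : 2 ^ (n - i) = 2 * 2 ^ (n - (i + 1)) := by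
        have : n - i = (n - (i + 1)) + 1 := by omega
        rw [this, pow_succ]; ring
      omega
  have hne : ∀ j, j ≤ n → ((F P' j).1).Nonempty := by
    intro j hj
    have := key j hj
    have : 0 < (F P' j).1.card := lt_of_lt_of_le (Nat.two_pow_pos _) this
    exact Finset.card_pos.mp this
  have hAmem : ∀ j, j ≤ n → A P' j ∈ (F P' j).1 := fun j hj => pick_mem (hne j hj)
  -- key membership: for i < j ≤ n, A j ∈ (F (i+1)).1
  have hmem : ∀ i j, i < j → j ≤ n → A P' j ∈ (F P' (i+1)).1 :=
    fun i j hij hj => F_subset P' (i+1) j hij (hAmem j hj)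
  refine ⟨bb P', A P', ?_, ?_⟩
  · intro i j hi hj hij
    -- wlog i < j
    have main : ∀ i j, i < j → j ≤ n → A P' i ≠ A P' j := by
      intro i j hij hj
      have h1 : A P' j ∈ (F P' i).1.erase (A P' i) :=
        F_subset_succ P' i (hmem i j hij hj)
      exact (Finset.ne_of_mem_erase h1).symm
    rcases Nat.lt_or_ge i j with h | h
    · exact main i j h hj
    · exact (main j i (by omega) hi).symm
  · intro i j hin hj hij
    have h1 : A P' j ∈ (F P' (i+1)).1 := hmem i j hij hj
    rw [F_succ_fst] at h1
    have h2 := (Finset.mem_filter.mp h1).2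
    have h3 : (fun t : Fin (i+1) => (F P' (i+1)).2 t.val) = (fun t : Fin (i+1) => A P' t.val) := by
      funext t
      exact F_snd_eq P' (i+1) t.val t.isLt
    calc P i (fun t => A P' t.val) (A P' j)
        = P' i ((F P' (i+1)).2) (A P' j) := by show _ = P i (fun t => (F P' (i+1)).2 t.val) (A P' j); rw [h3]
      _ = bb P' i := h2
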